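/- Let β' and β be consecutive elements of Φ ∪ {0} with β' < β, write β = p/n in lowest terms, let d : J → ℕ be any function, and let p₀ ≥ 1 be an integer. Define d'(p₀, γ) = ∑_{v∈J} d(v)·(⌊γv⌋ + (p₀−1)v) for γ ∈ Φ ∪ {0}. Then d'(p₀, β) = d'(p₀, β') + ∑_{v∈J, n∣v} d(v). -/

import Mathlib

/-- the recursion for `d'(p₀, γ)` between consecutive elements
`β' < β` of `Φ ∪ {0}`, where `β = p/n` in lowest terms:
`d'(p₀, β) = d'(p₀, β') + ∑_{v ∈ J, n ∣ v} d(v)`. -/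
theorem stmt_4 (J : Finset ℕ) (hJne : J.Nonempty) (hJpos : ∀ v ∈ J, 0 < v)
    (Φ : Set ℚ)
    (hΦ : Φ = {β : ℚ | 0 < β ∧ β ≤ 1 ∧ ∃ v ∈ J, ∃ m : ℤ, (v : ℚ) * β = m})
    (β' β : ℚ) (hβ' : β' ∈ Φ ∪ {0}) (hβ : β ∈ Φ ∪ {0}) (hlt : β' < β)
    (hcons : ∀ γ ∈ Φ, ¬(β' < γ ∧ γ < β))
    (p n : ℕ) (hp : 0 < p) (hn : 0 < n) (hcop : Nat.Coprime p n)
    (hβpn : β = (p : ℚ) / (n : ℚ))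
    (d : ℕ → ℕ) (p₀ : ℕ) (hp₀ : 1 ≤ p₀)
    (d' : ℚ → ℚ)
    (hd' : ∀ γ : ℚ, d' γ = ∑ v ∈ J, (d v : ℚ) *
        ((⌊γ * (v : ℚ)⌋ : ℚ) + ((p₀ : ℚ) - 1) * (v : ℚ))) :
    d' β = d' β' + ∑ v ∈ J.filter (fun v => n ∣ v), (d v : ℚ) := by
  have hβ'0 : (0 : ℚ) ≤ β' := by
    rcases hβ' with h | h
    · rw [hΦ] at h; exact le_of_lt h.1
    · simp only [Set.mem_singleton_iff] at h; simp [h]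
  have hβpos : (0 : ℚ) < β := lt_of_le_of_lt hβ'0 hlt
  have hβΦ : β ∈ Φ := by
    rcases hβ with h | h
    · exact h
    · simp only [Set.mem_singleton_iff] at h; rw [h] at hβpos; exact absurd hβpos (lt_irrefl 0)
  have hβle1 : β ≤ 1 := by rw [hΦ] at hβΦ; exact hβΦ.2.1
  have hnQ : (0 : ℚ) < (n : ℚ) := by exact_mod_cast hn
  -- no integer strictly between β'·v and β·v
  have noint : ∀ v ∈ J, ∀ m : ℤ, β' * (v : ℚ) < (m : ℚ) → β * (v : ℚ) ≤ (m : ℚ) := by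
    intro v hv m h1
    by_contra h2
    push_neg at h2
    have hvQ : (0 : ℚ) < (v : ℚ) := by exact_mod_cast hJpos v hv
    have hmpos : (0 : ℚ) < (m : ℚ) := lt_of_le_of_lt (mul_nonneg hβ'0 hvQ.le) h1
    set γ : ℚ := (m : ℚ) / (v : ℚ) with hγ
    have hγβ' : β' < γ := by rw [hγ, lt_div_iff₀ hvQ]; linarith
    have hγβ : γ < β := by rw [hγ, div_lt_iff₀ hvQ]; linarith
    have hγΦ : γ ∈ Φ := by
      rw [hΦ]
      refine ⟨div_pos hmpos hvQ, le_trans hγβ.le hβle1, v, hv, m, ?_⟩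
      rw [hγ]; field_simp
    exact hcons γ hγΦ ⟨hγβ', hγβ⟩
  -- β·v is not an integer when n ∤ v
  have hnotint : ∀ v ∈ J, ¬ n ∣ v → ∀ m : ℤ, β * (v : ℚ) ≠ (m : ℚ) := by
    intro v hv hnd m heq
    apply hnd
    rw [hβpn] at heq
    have hQ : (p : ℚ) * v = m * n := by field_simp at heq; linarith
    have hz : (p : ℤ) * v = m * n := by exact_mod_cast hQ
    have hdz : (n : ℤ) ∣ (p : ℤ) * (v : ℤ) := ⟨m, by linarith⟩
    have hdn : n ∣ p * v := by exact_mod_cast hdz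
    exact hcop.symm.dvd_of_dvd_mul_left hdn
  -- the key floor identity
  have key : ∀ v ∈ J, ⌊β * (v : ℚ)⌋ = ⌊β' * (v : ℚ)⌋ + (if n ∣ v then 1 else 0) := by
    intro v hv
    have hvQ : (0 : ℚ) < (v : ℚ) := by exact_mod_cast hJpos v hv
    by_cases hdvd : n ∣ v
    · obtain ⟨c, rfl⟩ := hdvd
      have hβv : β * ((n * c : ℕ) : ℚ) = ((p * c : ℕ) : ℚ) := by
        rw [hβpn]; push_cast; field_simp
      have hfloor : ⌊β * ((n * c : ℕ) : ℚ)⌋ = ((p * c : ℕ) : ℤ) := by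
        rw [hβv]; exact Int.floor_natCast _
      have h1 : β' * ((n * c : ℕ) : ℚ) < ((p * c : ℕ) : ℚ) := by
        rw [← hβv]; exact mul_lt_mul_of_pos_right hlt hvQ
      have h2 : ⌊β' * ((n * c : ℕ) : ℚ)⌋ < ((p * c : ℕ) : ℤ) := by
        apply Int.floor_lt.2; exact_mod_cast h1
      have h3 : ((p * c : ℕ) : ℤ) - 1 ≤ ⌊β' * ((n * c : ℕ) : ℚ)⌋ := by
        by_contra h
        push_neg at h
        have hlt1 : β' * ((n * c : ℕ) : ℚ) < ((⌊β' * ((n * c : ℕ) : ℚ)⌋ + 1 : ℤ) : ℚ) := by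
          push_cast; exact Int.lt_floor_add_one _
        have := noint _ hv (⌊β' * ((n * c : ℕ) : ℚ)⌋ + 1) hlt1
        rw [hβv] at this
        have hc : ((⌊β' * ((n * c : ℕ) : ℚ)⌋ + 1 : ℤ) : ℚ) < ((p * c : ℕ) : ℚ) := by
          exact_mod_cast (by omega : ⌊β' * ((n * c : ℕ) : ℚ)⌋ + 1 < ((p * c : ℕ) : ℤ))
        linarith
      rw [if_pos ⟨c, rfl⟩, hfloor]
      omega
    · have hle : ⌊β' * (v : ℚ)⌋ ≤ ⌊β * (v : ℚ)⌋ :=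
        Int.floor_le_floor (mul_le_mul_of_nonneg_right hlt.le hvQ.le)
      have hge : ⌊β * (v : ℚ)⌋ ≤ ⌊β' * (v : ℚ)⌋ := by
        by_contra h
        push_neg at h
        have h1 : β' * (v : ℚ) < ((⌊β * (v : ℚ)⌋ : ℤ) : ℚ) := by
          have ha := Int.lt_floor_add_one (β' * (v : ℚ))
          have hb : ((⌊β' * (v : ℚ)⌋ + 1 : ℤ) : ℚ) ≤ ((⌊β * (v : ℚ)⌋ : ℤ) : ℚ) := by
            exact_mod_cast (by omega : ⌊β' * (v : ℚ)⌋ + 1 ≤ ⌊β * (v : ℚ)⌋)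
          push_cast at ha hb ⊢
          linarith
        have h2 := noint v hv ⌊β * (v : ℚ)⌋ h1
        have h3 := Int.floor_le (β * (v : ℚ))
        exact hnotint v hv hdvd _ (le_antisymm h2 h3)
      rw [if_neg hdvd]
      omega
  rw [hd' β, hd' β', Finset.sum_filter, ← Finset.sum_add_distrib]
  refine Finset.sum_congr rfl fun v hv => ?_
  have hk := key v hv
  by_cases hdvd : n ∣ v
  · rw [if_pos hdvd] at hk ⊢
    have hq : (⌊β * (v : ℚ)⌋ : ℚ) = (⌊β' * (v : ℚ)⌋ : ℚ) + 1 := by exact_mod_cast hk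
    rw [hq]; ring
  · rw [if_neg hdvd] at hk ⊢
    have hq : (⌊β * (v : ℚ)⌋ : ℚ) = (⌊β' * (v : ℚ)⌋ : ℚ) := by
      exact_mod_cast (by omega : ⌊β * (v : ℚ)⌋ = ⌊β' * (v : ℚ)⌋)
    rw [hq]; ring
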